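/- Let M be a hypersurface in a Riemannian manifold N admitting a torse-forming vector field P = φη + V with generating form ω. Then ⟨∇̄_{ω♯_M} H, P⟩ = φ ω(grad f) − f ω(A(V)), where H = fη is the mean curvature vector, A the shape operator, and ω♯_M the tangential dual of ω. -/
import Mathlib


/-- Let `M` be a hypersurface in a Riemannian manifold `N` admitting a
torse-forming vector field `P = φ η + V` with generating form `ω`.  Then
`⟨∇̄_{ω♯_M} H, P⟩ = φ ω(grad f) − f ω(A(V))`, where `H = f η` is the mean curvature
vector, `A` the shape operator and `ω♯_M` the tangential dual of `ω`. -/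
theorem bracket_nabla_omega_sharp_H_P
    {M W : Type*} [AddCommGroup W] [Module ℝ W]
    (g : M → W →ₗ[ℝ] W →ₗ[ℝ] ℝ)
    (nabla : (M → W) → (M → W) → (M → W))
    (Dop : (M → W) → (M → ℝ) → (M → ℝ))
    (η P V gradphi gradf ωM H : M → W) (φ μ f : M → ℝ) (ω : M → W →ₗ[ℝ] ℝ)
    (A : (M → W) → (M → W))
    -- the metric is symmetric and η is a unit normal
    (hsym : ∀ p v w, g p v w = g p w v)
    (hη : ∀ p, g p (η p) (η p) = 1)
    -- decomposition P = φ η + V with φ = ⟨P,η⟩ and V tangent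
    (hφ : ∀ p, φ p = g p (P p) (η p))
    (hPdec : ∀ p, P p = φ p • η p + V p)
    (hVtan : ∀ p, g p (V p) (η p) = 0)
    -- H = f η is the mean curvature vector field
    (hH : ∀ p, H p = f p • η p)
    -- the shape operator is tangent-valued and self-adjoint
    (hAtan : ∀ X p, g p (A X p) (η p) = 0)
    (hAsym : ∀ X Y : M → W, ∀ p, g p (A X p) (Y p) = g p (X p) (A Y p))
    -- P is torse-forming: ∇̄_X P = μ X + ω(X) P
    (hTF : ∀ X : M → W, (∀ p, g p (X p) (η p) = 0) →
        ∀ p, nabla X P p = μ p • X p + ω p (X p) • P p)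
    -- compatibility of the connection with the metric
    (hcompat : ∀ (X Y Z : M → W) (p : M),
        Dop X (fun q => g q (Y q) (Z q)) p
          = g p (nabla X Y p) (Z p) + g p (Y p) (nabla X Z p))
    -- Leibniz rule for the directional derivative on products of functions
    (hDmul : ∀ (X : M → W) (a b : M → ℝ) (p : M),
        Dop X (fun q => a q * b q) p = Dop X a p * b p + a p * Dop X b p)
    -- gradf, gradphi are the gradients on M of f and φ
    (hgradftan : ∀ p, g p (gradf p) (η p) = 0)
    (hgradf : ∀ X : M → W, (∀ p, g p (X p) (η p) = 0) →
        ∀ p, g p (gradf p) (X p) = Dop X f p)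
    (hgradphitan : ∀ p, g p (gradphi p) (η p) = 0)
    (hgradphi : ∀ X : M → W, (∀ p, g p (X p) (η p) = 0) →
        ∀ p, g p (gradphi p) (X p) = Dop X φ p)
    -- ωM is the tangential dual ω♯_M of ω
    (hωMtan : ∀ p, g p (ωM p) (η p) = 0)
    (hωM : ∀ X : M → W, (∀ p, g p (X p) (η p) = 0) →
        ∀ p, g p (ωM p) (X p) = ω p (X p))
    -- Lemma 2 of the paper: grad φ = φ ω♯_M − A(V)
    (hL2 : ∀ p, gradphi p = φ p • ωM p - A V p)
    (p : M) :
    g p (nabla ωM H p) (P p) = φ p * ω p (gradf p) - f p * ω p (A V p) := by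
  have hHP : (fun q => g q (H q) (P q)) = fun q => f q * φ q := by
    funext q
    rw [hH q, map_smul]
    simp only [LinearMap.smul_apply, smul_eq_mul]
    rw [hsym q, ← hφ q]
  have h1 : Dop ωM (fun q => g q (H q) (P q)) p
      = Dop ωM f p * φ p + f p * Dop ωM φ p := by
    rw [hHP]; exact hDmul ωM f φ p
  have hf : Dop ωM f p = ω p (gradf p) := by
    rw [← hgradf ωM hωMtan p, hsym]
    exact hωM gradf hgradftan p
  have hphi : Dop ωM φ p = φ p * ω p (ωM p) - ω p (A V p) := by
    rw [← hgradphi ωM hωMtan p, hL2 p, map_sub, map_smul]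
    simp only [LinearMap.sub_apply, LinearMap.smul_apply, smul_eq_mul]
    rw [hωM ωM hωMtan p, hsym p (A V p) (ωM p), hωM (A V) (hAtan V) p]
  have h2 : g p (H p) (nabla ωM P p) = ω p (ωM p) * (f p * φ p) := by
    rw [hTF ωM hωMtan p, hH p, map_smul]
    simp only [map_add, map_smul, LinearMap.smul_apply, LinearMap.add_apply,
      smul_eq_mul]
    rw [hsym p (η p) (ωM p), hωMtan p, hsym p (η p) (P p), ← hφ p]
    ring
  have hmain := hcompat ωM H P p
  rw [h1, hf, hphi] at hmain
  rw [h2] at hmain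
  linarith [hmain]
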